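/- The set 𝔔_nqm of norm quasi-mixing quadratic stochastic operators is a dense and open subset of the set 𝔔 of all quadratic stochastic operators for the topology induced by the metric d_u(Q₁,Q₂) := sup_{f∈𝒟} ‖ℚ₁(f) − ℚ₂(f)‖₁. -/

import Mathlib

open MeasureTheory Filter Topology

noncomputable section

/-- The set of densities in `L¹(μ)`. -/
def Density {X : Type*} [MeasurableSpace X] (μ : Measure X) : Set (Lp ℝ 1 μ) :=
  {f | 0 ≤ f ∧ ‖f‖ = 1}

/-- `Q : L¹ × L¹ → L¹` is a quadratic stochastic operator: bilinear, positivity preserving,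
symmetric and `‖Q(f,g)‖₁ = ‖f‖₁ ‖g‖₁` for `f, g ≥ 0`. -/
structure IsQSO {X : Type*} [MeasurableSpace X] (μ : Measure X)
    (Q : Lp ℝ 1 μ → Lp ℝ 1 μ → Lp ℝ 1 μ) : Prop where
  add_left : ∀ f f' g, Q (f + f') g = Q f g + Q f' g
  smul_left : ∀ (c : ℝ) f g, Q (c • f) g = c • Q f g
  add_right : ∀ f g g', Q f (g + g') = Q f g + Q f g'
  smul_right : ∀ (c : ℝ) f g, Q f (c • g) = c • Q f g
  nonneg : ∀ f g, 0 ≤ f → 0 ≤ g → 0 ≤ Q f g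
  symm : ∀ f g, Q f g = Q g f
  norm_mul : ∀ f g, 0 ≤ f → 0 ≤ g → ‖Q f g‖ = ‖f‖ * ‖g‖

/-- The quadratic map `ℚ(f) = Q(f,f)`. -/
def QQ {X : Type*} [MeasurableSpace X] {μ : Measure X}
    (Q : Lp ℝ 1 μ → Lp ℝ 1 μ → Lp ℝ 1 μ) (f : Lp ℝ 1 μ) : Lp ℝ 1 μ := Q f f

/-- The iterates `ℚⁿ`. -/
def Qiter {X : Type*} [MeasurableSpace X] {μ : Measure X}
    (Q : Lp ℝ 1 μ → Lp ℝ 1 μ → Lp ℝ 1 μ) (n : ℕ) : Lp ℝ 1 μ → Lp ℝ 1 μ := (QQ Q)^[n]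

/-- `Pchain Q f n = P_f^{[0,n]}`, the nonhomogeneous Markov chain associated with `Q`
and the density `f`, i.e. `P_f^{[0,0]} = id` and
`P_f^{[0,n+1]}(g) = Q(ℚⁿ(f), P_f^{[0,n]}(g))`. -/
def Pchain {X : Type*} [MeasurableSpace X] {μ : Measure X}
    (Q : Lp ℝ 1 μ → Lp ℝ 1 μ → Lp ℝ 1 μ) (f : Lp ℝ 1 μ) :
    ℕ → Lp ℝ 1 μ → Lp ℝ 1 μ
  | 0 => id
  | n + 1 => fun g => Q (Qiter Q n f) (Pchain Q f n g)

/-- The metric `d_u(Q₁,Q₂) = sup_{f ∈ 𝒟} ‖ℚ₁(f) - ℚ₂(f)‖₁`. -/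
def du {X : Type*} [MeasurableSpace X] (μ : Measure X)
    (Q₁ Q₂ : Lp ℝ 1 μ → Lp ℝ 1 μ → Lp ℝ 1 μ) : ℝ :=
  ⨆ f : Density μ, ‖Q₁ f f - Q₂ f f‖

/-- The metric `d̂_u(Q₁,Q₂) = sup_{f,g ∈ 𝒟} ‖Q₁(f,g) - Q₂(f,g)‖₁`. -/
def dhat {X : Type*} [MeasurableSpace X] (μ : Measure X)
    (Q₁ Q₂ : Lp ℝ 1 μ → Lp ℝ 1 μ → Lp ℝ 1 μ) : ℝ :=
  ⨆ f : Density μ, ⨆ g : Density μ, ‖Q₁ f g - Q₂ f g‖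

/-- `supDiff μ Q n = sup_{f,g,h ∈ 𝒟} ‖P_f^{[0,n]}(g) - P_f^{[0,n]}(h)‖₁`. -/
def supDiff {X : Type*} [MeasurableSpace X] (μ : Measure X)
    (Q : Lp ℝ 1 μ → Lp ℝ 1 μ → Lp ℝ 1 μ) (n : ℕ) : ℝ :=
  ⨆ f : Density μ, ⨆ g : Density μ, ⨆ h : Density μ,
    ‖Pchain Q f n g - Pchain Q f n h‖

/-- `Q` is norm quasi-mixing. -/
def NormQuasiMixing {X : Type*} [MeasurableSpace X] (μ : Measure X)
    (Q : Lp ℝ 1 μ → Lp ℝ 1 μ → Lp ℝ 1 μ) : Prop :=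
  Tendsto (fun n => supDiff μ Q n) atTop (𝓝 0)

/-- `Q` is norm mixing (uniformly asymptotically stable). -/
def NormMixing {X : Type*} [MeasurableSpace X] (μ : Measure X)
    (Q : Lp ℝ 1 μ → Lp ℝ 1 μ → Lp ℝ 1 μ) : Prop :=
  ∃ f ∈ Density μ,
    Tendsto (fun n => ⨆ g : Density μ, ‖Qiter Q n g - f‖) atTop (𝓝 0)

end

noncomputable section

namespace NQM

variable {X : Type*} [MeasurableSpace X] {μ : Measure X}
variable {Q Q' : Lp ℝ 1 μ → Lp ℝ 1 μ → Lp ℝ 1 μ}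

/-! ### The integral functional -/

def Iop (μ : Measure X) (f : Lp ℝ 1 μ) : ℝ := ∫ x, f x ∂μ

lemma Iop_add (f g : Lp ℝ 1 μ) : Iop μ (f + g) = Iop μ f + Iop μ g := by
  unfold Iop
  rw [integral_congr_ae (Lp.coeFn_add f g)]
  exact integral_add (L1.integrable_coeFn f) (L1.integrable_coeFn g)

lemma Iop_sub (f g : Lp ℝ 1 μ) : Iop μ (f - g) = Iop μ f - Iop μ g := by
  unfold Iop
  rw [integral_congr_ae (Lp.coeFn_sub f g)]
  exact integral_sub (L1.integrable_coeFn f) (L1.integrable_coeFn g)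

lemma Iop_eq_norm {f : Lp ℝ 1 μ} (h : 0 ≤ f) : Iop μ f = ‖f‖ := by
  rw [L1.norm_eq_integral_norm]
  refine integral_congr_ae ?_
  filter_upwards [(Lp.coeFn_nonneg f).2 h] with x hx
  exact (Real.norm_of_nonneg hx).symm

lemma norm_add_of_nonneg {f g : Lp ℝ 1 μ} (hf : 0 ≤ f) (hg : 0 ≤ g) :
    ‖f + g‖ = ‖f‖ + ‖g‖ := by
  rw [← Iop_eq_norm (add_nonneg hf hg), Iop_add, Iop_eq_norm hf, Iop_eq_norm hg]

lemma norm_posPart_add_norm_negPart (w : Lp ℝ 1 μ) : ‖w⁺‖ + ‖w⁻‖ = ‖w‖ := by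
  rw [← Iop_eq_norm (posPart_nonneg w), ← Iop_eq_norm (negPart_nonneg w), ← Iop_add,
    posPart_add_negPart, Iop_eq_norm (abs_nonneg w), norm_abs_eq_norm]

lemma norm_posPart_le (w : Lp ℝ 1 μ) : ‖w⁺‖ ≤ ‖w‖ := by
  have := norm_posPart_add_norm_negPart w
  have h2 : (0:ℝ) ≤ ‖w⁻‖ := norm_nonneg _
  linarith

lemma Iop_density {f : Lp ℝ 1 μ} (hf : f ∈ Density μ) : Iop μ f = 1 := by
  rw [Iop_eq_norm hf.1, hf.2]

/-! ### Basic QSO lemmas -/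

lemma _root_.IsQSO.sub_right (hQ : IsQSO μ Q) (f g h : Lp ℝ 1 μ) :
    Q f (g - h) = Q f g - Q f h := by
  rw [eq_sub_iff_add_eq, ← hQ.add_right, sub_add_cancel]

lemma _root_.IsQSO.sub_left (hQ : IsQSO μ Q) (f g h : Lp ℝ 1 μ) :
    Q (f - g) h = Q f h - Q g h := by
  rw [hQ.symm (f - g) h, hQ.sub_right, hQ.symm h f, hQ.symm h g]

lemma _root_.IsQSO.norm_le (hQ : IsQSO μ Q) {u : Lp ℝ 1 μ} (hu : 0 ≤ u) (w : Lp ℝ 1 μ) :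
    ‖Q u w‖ ≤ ‖u‖ * ‖w‖ := by
  have hw : Q u w = Q u w⁺ - Q u w⁻ := by rw [← hQ.sub_right, posPart_sub_negPart]
  rw [hw]
  refine (norm_sub_le _ _).trans ?_
  rw [hQ.norm_mul u _ hu (posPart_nonneg w), hQ.norm_mul u _ hu (negPart_nonneg w),
    ← mul_add, norm_posPart_add_norm_negPart]

lemma _root_.IsQSO.mem_density (hQ : IsQSO μ Q) {f g : Lp ℝ 1 μ}
    (hf : f ∈ Density μ) (hg : g ∈ Density μ) : Q f g ∈ Density μ :=
  ⟨hQ.nonneg f g hf.1 hg.1, by rw [hQ.norm_mul f g hf.1 hg.1, hf.2, hg.2, one_mul]⟩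

lemma _root_.IsQSO.qiter_mem (hQ : IsQSO μ Q) {f : Lp ℝ 1 μ} (hf : f ∈ Density μ) (n : ℕ) :
    Qiter Q n f ∈ Density μ := by
  induction n with
  | zero => exact hf
  | succ n ih =>
    rw [Qiter, Function.iterate_succ_apply']
    exact hQ.mem_density ih ih

lemma Pchain_succ (f g : Lp ℝ 1 μ) (n : ℕ) :
    Pchain Q f (n + 1) g = Q (Qiter Q n f) (Pchain Q f n g) := rfl

lemma _root_.IsQSO.pchain_mem (hQ : IsQSO μ Q) {f g : Lp ℝ 1 μ}
    (hf : f ∈ Density μ) (hg : g ∈ Density μ) (n : ℕ) :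
    Pchain Q f n g ∈ Density μ := by
  induction n with
  | zero => exact hg
  | succ n ih => exact hQ.mem_density (hQ.qiter_mem hf n) ih

lemma _root_.IsQSO.pchain_sub (hQ : IsQSO μ Q) (f g h : Lp ℝ 1 μ) (n : ℕ) :
    Pchain Q f n g - Pchain Q f n h = Pchain Q f n (g - h) := by
  induction n with
  | zero => rfl
  | succ n ih => rw [Pchain_succ, Pchain_succ, Pchain_succ, ← hQ.sub_right, ih]

lemma _root_.IsQSO.pchain_smul (hQ : IsQSO μ Q) (c : ℝ) (f g : Lp ℝ 1 μ) (n : ℕ) :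
    Pchain Q f n (c • g) = c • Pchain Q f n g := by
  induction n with
  | zero => rfl
  | succ n ih => rw [Pchain_succ, Pchain_succ, ih, hQ.smul_right]

lemma Pchain_shift (f g : Lp ℝ 1 μ) (n m : ℕ) :
    Pchain Q f (n + m) g = Pchain Q (Qiter Q n f) m (Pchain Q f n g) := by
  induction m with
  | zero => rfl
  | succ m ih =>
    have hiter : Qiter Q (n + m) f = Qiter Q m (Qiter Q n f) := by
      rw [Qiter, Qiter, Qiter, add_comm, Function.iterate_add_apply]
    rw [← Nat.add_assoc, Pchain_succ, Pchain_succ, ih, hiter]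

end NQM

namespace NQM

variable {X : Type*} [MeasurableSpace X] {μ : Measure X}
variable {Q Q' : Lp ℝ 1 μ → Lp ℝ 1 μ → Lp ℝ 1 μ}

/-! ### sup machinery for `supDiff` -/

lemma supDiff_le [Nonempty ↥(Density μ)] {n : ℕ} {C : ℝ}
    (hC : ∀ f g h : Lp ℝ 1 μ, f ∈ Density μ → g ∈ Density μ → h ∈ Density μ →
      ‖Pchain Q f n g - Pchain Q f n h‖ ≤ C) : supDiff μ Q n ≤ C :=
  ciSup_le fun f => ciSup_le fun g => ciSup_le fun h => hC f g h f.2 g.2 h.2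

lemma norm_pchain_diff_le_two (hQ : IsQSO μ Q) {f g h : Lp ℝ 1 μ}
    (hf : f ∈ Density μ) (hg : g ∈ Density μ) (hh : h ∈ Density μ) (n : ℕ) :
    ‖Pchain Q f n g - Pchain Q f n h‖ ≤ 2 := by
  refine (norm_sub_le _ _).trans ?_
  rw [(hQ.pchain_mem hf hg n).2, (hQ.pchain_mem hf hh n).2]
  norm_num

lemma le_supDiff (hQ : IsQSO μ Q) {f g h : Lp ℝ 1 μ}
    (hf : f ∈ Density μ) (hg : g ∈ Density μ) (hh : h ∈ Density μ) (n : ℕ) :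
    ‖Pchain Q f n g - Pchain Q f n h‖ ≤ supDiff μ Q n := by
  haveI : Nonempty ↥(Density μ) := ⟨⟨f, hf⟩⟩
  have B1 : ∀ f g : ↥(Density μ), BddAbove (Set.range fun h : ↥(Density μ) =>
      ‖Pchain Q (f:Lp ℝ 1 μ) n g - Pchain Q (f:Lp ℝ 1 μ) n h‖) := by
    intro f g
    refine ⟨2, ?_⟩
    rintro x ⟨h, rfl⟩
    exact norm_pchain_diff_le_two hQ f.2 g.2 h.2 n
  have B2 : ∀ f : ↥(Density μ), BddAbove (Set.range fun g : ↥(Density μ) =>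
      ⨆ h : ↥(Density μ), ‖Pchain Q (f:Lp ℝ 1 μ) n g - Pchain Q (f:Lp ℝ 1 μ) n h‖) := by
    intro f
    refine ⟨2, ?_⟩
    rintro x ⟨g, rfl⟩
    exact ciSup_le fun h => norm_pchain_diff_le_two hQ f.2 g.2 h.2 n
  have B3 : BddAbove (Set.range fun f : ↥(Density μ) =>
      ⨆ g : ↥(Density μ), ⨆ h : ↥(Density μ),
        ‖Pchain Q (f:Lp ℝ 1 μ) n g - Pchain Q (f:Lp ℝ 1 μ) n h‖) := by
    refine ⟨2, ?_⟩
    rintro x ⟨f, rfl⟩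
    exact ciSup_le fun g => ciSup_le fun h => norm_pchain_diff_le_two hQ f.2 g.2 h.2 n
  calc ‖Pchain Q f n g - Pchain Q f n h‖
      ≤ ⨆ h' : ↥(Density μ), ‖Pchain Q f n g - Pchain Q f n h'‖ :=
        le_ciSup (B1 ⟨f, hf⟩ ⟨g, hg⟩) ⟨h, hh⟩
    _ ≤ ⨆ g' : ↥(Density μ), ⨆ h' : ↥(Density μ), ‖Pchain Q f n g' - Pchain Q f n h'‖ :=
        le_ciSup (B2 ⟨f, hf⟩) ⟨g, hg⟩
    _ ≤ supDiff μ Q n := le_ciSup B3 ⟨f, hf⟩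

lemma supDiff_nonneg [Nonempty ↥(Density μ)] (hQ : IsQSO μ Q) (n : ℕ) :
    0 ≤ supDiff μ Q n := by
  obtain ⟨f⟩ := (inferInstance : Nonempty ↥(Density μ))
  exact le_trans (norm_nonneg _) (le_supDiff hQ f.2 f.2 f.2 n)

/-! ### Contraction and submultiplicativity -/

lemma smul_nonneg_Lp {c : ℝ} (hc : 0 ≤ c) {f : Lp ℝ 1 μ} (hf : 0 ≤ f) :
    0 ≤ c • f := by
  refine (Lp.coeFn_nonneg _).1 ?_
  filter_upwards [Lp.coeFn_smul c f, (Lp.coeFn_nonneg f).2 hf] with x h1 h2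
  rw [h1]
  exact mul_nonneg hc h2

lemma pchain_contract [Nonempty ↥(Density μ)] (hQ : IsQSO μ Q) {f u v : Lp ℝ 1 μ}
    (hf : f ∈ Density μ) (hu : u ∈ Density μ) (hv : v ∈ Density μ) (m : ℕ) :
    ‖Pchain Q f m u - Pchain Q f m v‖ ≤ ‖(u - v)⁺‖ * supDiff μ Q m := by
  have hIw : Iop μ (u - v) = 0 := by
    rw [Iop_sub, Iop_density hu, Iop_density hv, sub_self]
  have hcc : ‖(u - v)⁻‖ = ‖(u - v)⁺‖ := by
    have h1 : Iop μ (u - v)⁺ - Iop μ (u - v)⁻ = 0 := by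
      rw [← Iop_sub, posPart_sub_negPart]; exact hIw
    rw [Iop_eq_norm (posPart_nonneg (u - v)), Iop_eq_norm (negPart_nonneg (u - v))] at h1
    linarith
  rcases eq_or_lt_of_le (norm_nonneg (u - v)⁺ : (0:ℝ) ≤ ‖(u - v)⁺‖) with hc0 | hc0
  · have hw0 : ‖u - v‖ = 0 := by
      rw [← norm_posPart_add_norm_negPart (u - v), hcc, ← hc0]; ring
    have huv : u = v := by rwa [norm_eq_zero, sub_eq_zero] at hw0
    rw [huv, sub_self, norm_zero]
    exact mul_nonneg (norm_nonneg _) (supDiff_nonneg hQ m)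
  · have hcne : ‖(u - v)⁺‖ ≠ 0 := ne_of_gt hc0
    have hinv : (0:ℝ) ≤ ‖(u - v)⁺‖⁻¹ := inv_nonneg.2 hc0.le
    have hu' : ‖(u - v)⁺‖⁻¹ • (u - v)⁺ ∈ Density μ := by
      refine ⟨smul_nonneg_Lp hinv (posPart_nonneg _), ?_⟩
      rw [norm_smul, Real.norm_eq_abs, abs_of_nonneg hinv, inv_mul_cancel₀ hcne]
    have hv' : ‖(u - v)⁺‖⁻¹ • (u - v)⁻ ∈ Density μ := by
      refine ⟨smul_nonneg_Lp hinv (negPart_nonneg _), ?_⟩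
      rw [norm_smul, Real.norm_eq_abs, abs_of_nonneg hinv, hcc, inv_mul_cancel₀ hcne]
    have key : Pchain Q f m u - Pchain Q f m v
        = ‖(u - v)⁺‖ • (Pchain Q f m (‖(u - v)⁺‖⁻¹ • (u - v)⁺)
            - Pchain Q f m (‖(u - v)⁺‖⁻¹ • (u - v)⁻)) := by
      rw [smul_sub, ← hQ.pchain_smul, ← hQ.pchain_smul, smul_inv_smul₀ hcne,
        smul_inv_smul₀ hcne, hQ.pchain_sub, hQ.pchain_sub, posPart_sub_negPart]
    rw [key, norm_smul, Real.norm_eq_abs, abs_of_nonneg hc0.le]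
    exact mul_le_mul_of_nonneg_left (le_supDiff hQ hf hu' hv' m) hc0.le

lemma supDiff_add_le [Nonempty ↥(Density μ)] (hQ : IsQSO μ Q) (n m : ℕ) :
    supDiff μ Q (n + m) ≤ supDiff μ Q n * supDiff μ Q m := by
  refine supDiff_le fun f g h hf hg hh => ?_
  rw [Pchain_shift, Pchain_shift]
  refine (pchain_contract hQ (hQ.qiter_mem hf n) (hQ.pchain_mem hf hg n)
    (hQ.pchain_mem hf hh n) m).trans ?_
  refine mul_le_mul_of_nonneg_right ?_ (supDiff_nonneg hQ m)
  refine (norm_posPart_le _).trans ?_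
  exact le_supDiff hQ hf hg hh n

lemma supDiff_anti [Nonempty ↥(Density μ)] (hQ : IsQSO μ Q) {m n : ℕ} (hmn : m ≤ n) :
    supDiff μ Q n ≤ supDiff μ Q m := by
  refine supDiff_le fun f g h hf hg hh => ?_
  have : n = (n - m) + m := (Nat.sub_add_cancel hmn).symm
  rw [this, Pchain_shift, Pchain_shift]
  exact le_supDiff hQ (hQ.qiter_mem hf _) (hQ.pchain_mem hf hg _) (hQ.pchain_mem hf hh _) m

lemma nqm_of_lt_one [Nonempty ↥(Density μ)] (hQ : IsQSO μ Q) {N : ℕ} {r : ℝ}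
    (h : supDiff μ Q N ≤ r) (hr0 : 0 ≤ r) (hr1 : r < 1) : NormQuasiMixing μ Q := by
  have hpow : ∀ k : ℕ, supDiff μ Q (N * (k + 1)) ≤ r ^ (k + 1) := by
    intro k
    induction k with
    | zero => simpa using h
    | succ k ih =>
      have hNk : N * (k + 2) = N * (k + 1) + N := by ring
      rw [hNk, pow_succ]
      exact (supDiff_add_le hQ _ _).trans
        (mul_le_mul ih h (supDiff_nonneg hQ _) (by positivity))
  rw [NormQuasiMixing, Metric.tendsto_atTop]
  intro ε hε
  obtain ⟨k, hk⟩ := exists_pow_lt_of_lt_one hε hr1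
  refine ⟨N * (k + 1), fun n hn => ?_⟩
  rw [Real.dist_eq, sub_zero, abs_of_nonneg (supDiff_nonneg hQ n)]
  calc supDiff μ Q n ≤ supDiff μ Q (N * (k + 1)) := supDiff_anti hQ hn
    _ ≤ r ^ (k + 1) := hpow k
    _ ≤ r ^ k := pow_le_pow_of_le_one hr0 hr1.le (Nat.le_succ k)
    _ < ε := hk

end NQM

namespace NQM

variable {X : Type*} [MeasurableSpace X] {μ : Measure X}
variable {Q Q' : Lp ℝ 1 μ → Lp ℝ 1 μ → Lp ℝ 1 μ}

/-! ### More Iop lemmas -/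

lemma Iop_smul (c : ℝ) (f : Lp ℝ 1 μ) : Iop μ (c • f) = c * Iop μ f := by
  unfold Iop
  rw [integral_congr_ae (Lp.coeFn_smul c f)]
  exact integral_smul c _

lemma Iop_nonneg {f : Lp ℝ 1 μ} (hf : 0 ≤ f) : 0 ≤ Iop μ f := by
  rw [Iop_eq_norm hf]; exact norm_nonneg f

/-! ### du machinery -/

lemma du_le [Nonempty ↥(Density μ)] {C : ℝ}
    (hC : ∀ f : Lp ℝ 1 μ, f ∈ Density μ → ‖Q f f - Q' f f‖ ≤ C) : du μ Q Q' ≤ C :=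
  ciSup_le fun f => hC f f.2

lemma le_du (hQ : IsQSO μ Q) (hQ' : IsQSO μ Q') {f : Lp ℝ 1 μ} (hf : f ∈ Density μ) :
    ‖Q f f - Q' f f‖ ≤ du μ Q Q' := by
  refine le_ciSup (f := fun f : ↥(Density μ) => ‖Q (f:Lp ℝ 1 μ) f - Q' (f:Lp ℝ 1 μ) f‖)
    ⟨2, ?_⟩ ⟨f, hf⟩
  rintro x ⟨g, rfl⟩
  refine (norm_sub_le _ _).trans ?_
  rw [(hQ.mem_density g.2 g.2).2, (hQ'.mem_density g.2 g.2).2]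
  norm_num

lemma du_nonneg [Nonempty ↥(Density μ)] (hQ : IsQSO μ Q) (hQ' : IsQSO μ Q') :
    0 ≤ du μ Q Q' := by
  obtain ⟨f⟩ := (inferInstance : Nonempty ↥(Density μ))
  exact le_trans (norm_nonneg _) (le_du hQ hQ' f.2)

/-! ### dhat-bound via polarization -/

lemma polarization (hQ : IsQSO μ Q) (f g : Lp ℝ 1 μ) :
    Q ((2⁻¹:ℝ) • (f + g)) ((2⁻¹:ℝ) • (f + g))
      = (2⁻¹:ℝ) • ((2⁻¹:ℝ) • ((Q f f + Q f g) + (Q f g + Q g g))) := by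
  rw [hQ.smul_left, hQ.smul_right, hQ.add_left, hQ.add_right, hQ.add_right, hQ.symm g f]

lemma half_add_mem {f g : Lp ℝ 1 μ} (hf : f ∈ Density μ) (hg : g ∈ Density μ) :
    (2⁻¹:ℝ) • (f + g) ∈ Density μ := by
  refine ⟨smul_nonneg_Lp (by norm_num) (add_nonneg hf.1 hg.1), ?_⟩
  rw [norm_smul, Real.norm_eq_abs, norm_add_of_nonneg hf.1 hg.1, hf.2, hg.2,
    abs_of_nonneg (by norm_num : (0:ℝ) ≤ 2⁻¹)]
  norm_num

lemma norm_app_sub_le (hQ : IsQSO μ Q) (hQ' : IsQSO μ Q') {f g : Lp ℝ 1 μ}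
    (hf : f ∈ Density μ) (hg : g ∈ Density μ) :
    ‖Q f g - Q' f g‖ ≤ 3 * du μ Q Q' := by
  haveI : Nonempty ↥(Density μ) := ⟨⟨f, hf⟩⟩
  set m := (2⁻¹:ℝ) • (f + g) with hm
  have hmem : m ∈ Density μ := half_add_mem hf hg
  have e1 := polarization hQ f g
  have e2 := polarization hQ' f g
  have key : Q f g - Q' f g = (2:ℝ) • (Q m m - Q' m m)
      - (2⁻¹:ℝ) • (Q f f - Q' f f) - (2⁻¹:ℝ) • (Q g g - Q' g g) := by
    rw [e1, e2]; module
  rw [key]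
  have h1 := le_du hQ hQ' hmem
  have h2 := le_du hQ hQ' hf
  have h3 := le_du hQ hQ' hg
  have t1 : ‖(2:ℝ) • (Q m m - Q' m m) - (2⁻¹:ℝ) • (Q f f - Q' f f)
      - (2⁻¹:ℝ) • (Q g g - Q' g g)‖
      ≤ ‖(2:ℝ) • (Q m m - Q' m m)‖ + ‖(2⁻¹:ℝ) • (Q f f - Q' f f)‖
        + ‖(2⁻¹:ℝ) • (Q g g - Q' g g)‖ :=
    (norm_sub_le _ _).trans (add_le_add_left (norm_sub_le _ _) _)
  refine t1.trans ?_
  rw [norm_smul, norm_smul, norm_smul]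
  simp only [Real.norm_eq_abs]
  rw [abs_of_nonneg (by norm_num : (0:ℝ) ≤ 2), abs_of_nonneg (by norm_num : (0:ℝ) ≤ 2⁻¹)]
  linarith

/-! ### Perturbation estimates -/

lemma qiter_pert (hQ : IsQSO μ Q) (hQ' : IsQSO μ Q') {f : Lp ℝ 1 μ}
    (hf : f ∈ Density μ) (n : ℕ) :
    ‖Qiter Q' n f - Qiter Q n f‖ ≤ 5 ^ n * du μ Q Q' := by
  haveI : Nonempty ↥(Density μ) := ⟨⟨f, hf⟩⟩
  induction n with
  | zero =>
    simp only [Qiter, Function.iterate_zero_apply, sub_self, norm_zero, pow_zero, one_mul]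
    exact du_nonneg hQ hQ'
  | succ n ih =>
    have ha' : Qiter Q' n f ∈ Density μ := hQ'.qiter_mem hf n
    have ha : Qiter Q n f ∈ Density μ := hQ.qiter_mem hf n
    set a' := Qiter Q' n f
    set a := Qiter Q n f
    have hstep : Qiter Q' (n+1) f - Qiter Q (n+1) f
        = (Q' a' a' - Q a' a') + Q a' (a' - a) + Q (a' - a) a := by
      rw [Qiter, Qiter, Function.iterate_succ_apply', Function.iterate_succ_apply',
        hQ.sub_right, hQ.sub_left]
      show QQ Q' a' - QQ Q a = _
      rw [QQ, QQ]
      abel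
    rw [hstep]
    have b1 : ‖Q' a' a' - Q a' a'‖ ≤ du μ Q Q' := by
      rw [norm_sub_rev]; exact le_du hQ hQ' ha'
    have b2 : ‖Q a' (a' - a)‖ ≤ ‖a' - a‖ := by
      have := hQ.norm_le ha'.1 (a' - a)
      rwa [ha'.2, one_mul] at this
    have b3 : ‖Q (a' - a) a‖ ≤ ‖a' - a‖ := by
      rw [hQ.symm]
      have := hQ.norm_le ha.1 (a' - a)
      rwa [ha.2, one_mul] at this
    have tri : ‖(Q' a' a' - Q a' a') + Q a' (a' - a) + Q (a' - a) a‖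
        ≤ ‖Q' a' a' - Q a' a'‖ + ‖Q a' (a' - a)‖ + ‖Q (a' - a) a‖ :=
      (norm_add_le _ _).trans (add_le_add_left (norm_add_le _ _) _)
    have hd0 := du_nonneg hQ hQ'
    have hp : (1:ℝ) ≤ 5 ^ n := one_le_pow₀ (by norm_num)
    calc ‖(Q' a' a' - Q a' a') + Q a' (a' - a) + Q (a' - a) a‖
        ≤ du μ Q Q' + ‖a' - a‖ + ‖a' - a‖ := tri.trans (by linarith)
      _ ≤ du μ Q Q' + 5 ^ n * du μ Q Q' + 5 ^ n * du μ Q Q' := by linarith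
      _ ≤ 5 ^ (n+1) * du μ Q Q' := by rw [pow_succ]; nlinarith

lemma pchain_pert (hQ : IsQSO μ Q) (hQ' : IsQSO μ Q') {f g : Lp ℝ 1 μ}
    (hf : f ∈ Density μ) (hg : g ∈ Density μ) (n : ℕ) :
    ‖Pchain Q' f n g - Pchain Q f n g‖ ≤ (6 ^ n - 1) * du μ Q Q' := by
  haveI : Nonempty ↥(Density μ) := ⟨⟨f, hf⟩⟩
  induction n with
  | zero => norm_num [Pchain]
  | succ n ih =>
    have ha' : Qiter Q' n f ∈ Density μ := hQ'.qiter_mem hf n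
    have ha : Qiter Q n f ∈ Density μ := hQ.qiter_mem hf n
    have hb' : Pchain Q' f n g ∈ Density μ := hQ'.pchain_mem hf hg n
    have hb : Pchain Q f n g ∈ Density μ := hQ.pchain_mem hf hg n
    set a' := Qiter Q' n f
    set a := Qiter Q n f
    set b' := Pchain Q' f n g
    set b := Pchain Q f n g
    have hstep : Pchain Q' f (n+1) g - Pchain Q f (n+1) g
        = (Q' a' b' - Q a' b') + Q (a' - a) b' + Q a (b' - b) := by
      rw [Pchain_succ, Pchain_succ, hQ.sub_right, hQ.sub_left]
      abel
    rw [hstep]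
    have b1 : ‖Q' a' b' - Q a' b'‖ ≤ 3 * du μ Q Q' := by
      rw [norm_sub_rev]; exact norm_app_sub_le hQ hQ' ha' hb'
    have b2 : ‖Q (a' - a) b'‖ ≤ 5 ^ n * du μ Q Q' := by
      rw [hQ.symm]
      have h := hQ.norm_le hb'.1 (a' - a)
      rw [hb'.2, one_mul] at h
      exact h.trans (qiter_pert hQ hQ' hf n)
    have b3 : ‖Q a (b' - b)‖ ≤ (6 ^ n - 1) * du μ Q Q' := by
      have h := hQ.norm_le ha.1 (b' - b)
      rw [ha.2, one_mul] at h
      exact h.trans ih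
    have tri : ‖(Q' a' b' - Q a' b') + Q (a' - a) b' + Q a (b' - b)‖
        ≤ ‖Q' a' b' - Q a' b'‖ + ‖Q (a' - a) b'‖ + ‖Q a (b' - b)‖ :=
      (norm_add_le _ _).trans (add_le_add_left (norm_add_le _ _) _)
    have hd0 := du_nonneg hQ hQ'
    have hp5 : (5:ℝ) ^ n ≤ 6 ^ n := pow_le_pow_left₀ (by norm_num) (by norm_num) n
    have hp6 : (1:ℝ) ≤ 6 ^ n := one_le_pow₀ (by norm_num)
    calc ‖(Q' a' b' - Q a' b') + Q (a' - a) b' + Q a (b' - b)‖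
        ≤ 3 * du μ Q Q' + 5 ^ n * du μ Q Q' + (6 ^ n - 1) * du μ Q Q' :=
          tri.trans (by linarith)
      _ ≤ (6 ^ (n+1) - 1) * du μ Q Q' := by rw [pow_succ]; nlinarith

lemma supDiff_pert [Nonempty ↥(Density μ)] (hQ : IsQSO μ Q) (hQ' : IsQSO μ Q') (n : ℕ) :
    supDiff μ Q' n ≤ supDiff μ Q n + 2 * (6 ^ n - 1) * du μ Q Q' := by
  refine supDiff_le fun f g h hf hg hh => ?_
  have t : ‖Pchain Q' f n g - Pchain Q' f n h‖
      ≤ ‖Pchain Q' f n g - Pchain Q f n g‖ + ‖Pchain Q f n g - Pchain Q f n h‖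
        + ‖Pchain Q f n h - Pchain Q' f n h‖ := by
    have := dist_triangle4 (Pchain Q' f n g) (Pchain Q f n g) (Pchain Q f n h)
      (Pchain Q' f n h)
    simpa [dist_eq_norm] using this
  have h1 := pchain_pert hQ hQ' hf hg n
  have h2 := le_supDiff hQ hf hg hh n
  have h3 : ‖Pchain Q f n h - Pchain Q' f n h‖ ≤ (6 ^ n - 1) * du μ Q Q' := by
    rw [norm_sub_rev]; exact pchain_pert hQ hQ' hf hh n
  linarith

end NQM

namespace NQM

variable {X : Type*} [MeasurableSpace X] {μ : Measure X}

lemma density_nonempty (hdim : 1 < Module.rank ℝ (Lp ℝ 1 μ)) :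
    Nonempty ↥(Density μ) := by
  have : Nontrivial (Lp ℝ 1 μ) := rank_pos_iff_nontrivial.1 (lt_trans one_pos hdim)
  obtain ⟨v, hv⟩ := exists_ne (0 : Lp ℝ 1 μ)
  have habs : 0 ≤ |v| := by
    rw [← posPart_add_negPart v]
    exact add_nonneg (posPart_nonneg v) (negPart_nonneg v)
  refine ⟨⟨‖v‖⁻¹ • |v|, smul_nonneg_Lp (inv_nonneg.2 (norm_nonneg v)) habs, ?_⟩⟩
  rw [norm_smul, Real.norm_eq_abs, abs_of_nonneg (inv_nonneg.2 (norm_nonneg v)),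
    norm_abs_eq_norm, inv_mul_cancel₀ (norm_ne_zero_iff.2 hv)]

/-- Density part: perturbing any QSO by a convex combination with the
"constant" QSO `(f,g) ↦ (∫f)(∫g)h₀` yields a norm quasi-mixing QSO. -/
theorem dense_part (hdim : 1 < Module.rank ℝ (Lp ℝ 1 μ))
    (Q : Lp ℝ 1 μ → Lp ℝ 1 μ → Lp ℝ 1 μ) (hQ : IsQSO μ Q) {ε : ℝ} (hε : 0 < ε) :
    ∃ Q' : Lp ℝ 1 μ → Lp ℝ 1 μ → Lp ℝ 1 μ,
      IsQSO μ Q' ∧ NormQuasiMixing μ Q' ∧ du μ Q Q' < ε := by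
  haveI hne : Nonempty ↥(Density μ) := density_nonempty hdim
  obtain ⟨⟨h₀, hh₀⟩⟩ := id hne
  set δ : ℝ := min (ε / 3) 2⁻¹ with hδdef
  have hδ0 : 0 < δ := lt_min (by linarith) (by norm_num)
  have hδhalf : δ ≤ 2⁻¹ := min_le_right _ _
  have hδ1 : δ ≤ 1 := hδhalf.trans (by norm_num)
  set Q' : Lp ℝ 1 μ → Lp ℝ 1 μ → Lp ℝ 1 μ :=
    fun f g => (1 - δ) • Q f g + (δ * (Iop μ f * Iop μ g)) • h₀ with hQ'def
  have hQ' : IsQSO μ Q' := by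
    constructor
    · intro f f' g
      simp only [hQ'def, hQ.add_left, Iop_add]
      module
    · intro c f g
      simp only [hQ'def, hQ.smul_left, Iop_smul]
      module
    · intro f g g'
      simp only [hQ'def, hQ.add_right, Iop_add]
      module
    · intro c f g
      simp only [hQ'def, hQ.smul_right, Iop_smul]
      module
    · intro f g hf hg
      refine add_nonneg (smul_nonneg_Lp (by linarith) (hQ.nonneg f g hf hg)) ?_
      exact smul_nonneg_Lp
        (mul_nonneg hδ0.le (mul_nonneg (Iop_nonneg hf) (Iop_nonneg hg))) hh₀.1
    · intro f g
      simp only [hQ'def, hQ.symm f g, mul_comm (Iop μ f) (Iop μ g)]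
    · intro f g hf hg
      have h1 : 0 ≤ (1 - δ) • Q f g := smul_nonneg_Lp (by linarith) (hQ.nonneg f g hf hg)
      have h2 : 0 ≤ (δ * (Iop μ f * Iop μ g)) • h₀ := smul_nonneg_Lp
        (mul_nonneg hδ0.le (mul_nonneg (Iop_nonneg hf) (Iop_nonneg hg))) hh₀.1
      simp only [hQ'def]
      rw [norm_add_of_nonneg h1 h2, norm_smul, norm_smul, Real.norm_eq_abs,
        Real.norm_eq_abs, abs_of_nonneg (by linarith : (0:ℝ) ≤ 1 - δ),
        abs_of_nonneg (mul_nonneg hδ0.le (mul_nonneg (Iop_nonneg hf) (Iop_nonneg hg))),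
        hQ.norm_mul f g hf hg, hh₀.2, Iop_eq_norm hf, Iop_eq_norm hg]
      ring
  refine ⟨Q', hQ', ?_, ?_⟩
  · -- norm quasi-mixing
    have claim : ∀ n : ℕ, ∀ f g h : Lp ℝ 1 μ, f ∈ Density μ → g ∈ Density μ →
        h ∈ Density μ → ‖Pchain Q' f n g - Pchain Q' f n h‖ ≤ 2 * (1 - δ) ^ n := by
      intro n
      induction n with
      | zero =>
        intro f g h hf hg hh
        simp only [Pchain, id_eq, pow_zero, mul_one]
        refine (norm_sub_le _ _).trans ?_
        rw [hg.2, hh.2]; norm_num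
      | succ n ih =>
        intro f g h hf hg hh
        have hbg : Pchain Q' f n g ∈ Density μ := hQ'.pchain_mem hf hg n
        have hbh : Pchain Q' f n h ∈ Density μ := hQ'.pchain_mem hf hh n
        have ha : Qiter Q' n f ∈ Density μ := hQ'.qiter_mem hf n
        rw [Pchain_succ, Pchain_succ, ← hQ'.sub_right]
        have hI0 : Iop μ (Pchain Q' f n g - Pchain Q' f n h) = 0 := by
          rw [Iop_sub, Iop_density hbg, Iop_density hbh, sub_self]
        have happ : Q' (Qiter Q' n f) (Pchain Q' f n g - Pchain Q' f n h)
            = (1 - δ) • Q (Qiter Q' n f) (Pchain Q' f n g - Pchain Q' f n h) := by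
          simp only [hQ'def] at hI0 ⊢
          simp only [hI0, mul_zero, zero_smul, add_zero]
        rw [happ, norm_smul, Real.norm_eq_abs, abs_of_nonneg (by linarith : (0:ℝ) ≤ 1 - δ)]
        have hb := hQ.norm_le ha.1 (Pchain Q' f n g - Pchain Q' f n h)
        rw [ha.2, one_mul] at hb
        have hih := ih f g h hf hg hh
        calc (1 - δ) * ‖Q (Qiter Q' n f) (Pchain Q' f n g - Pchain Q' f n h)‖
            ≤ (1 - δ) * (2 * (1 - δ) ^ n) := by
              refine mul_le_mul_of_nonneg_left (hb.trans ?_) (by linarith)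
              exact hih
          _ = 2 * (1 - δ) ^ (n + 1) := by ring
    have hsup : ∀ n, supDiff μ Q' n ≤ 2 * (1 - δ) ^ n := fun n =>
      supDiff_le fun f g h hf hg hh => claim n f g h hf hg hh
    have htend : Tendsto (fun n : ℕ => 2 * (1 - δ) ^ n) atTop (𝓝 0) := by
      have := tendsto_pow_atTop_nhds_zero_of_lt_one (by linarith : (0:ℝ) ≤ 1 - δ)
        (by linarith : (1:ℝ) - δ < 1)
      simpa using this.const_mul 2
    exact squeeze_zero (fun n => supDiff_nonneg hQ' n) hsup htend
  · -- du < ε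
    have hdu : du μ Q Q' ≤ 2 * δ := by
      refine du_le fun f hf => ?_
      have key : Q f f - Q' f f = δ • (Q f f - h₀) := by
        simp only [hQ'def, Iop_density hf, mul_one]
        module
      rw [key, norm_smul, Real.norm_eq_abs, abs_of_nonneg hδ0.le]
      have : ‖Q f f - h₀‖ ≤ 2 := by
        refine (norm_sub_le _ _).trans ?_
        rw [(hQ.mem_density hf hf).2, hh₀.2]; norm_num
      nlinarith
    have : 2 * δ ≤ 2 * (ε / 3) := by
      have := min_le_left (ε / 3) (2⁻¹ : ℝ)
      linarith [this]
    linarith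

theorem open_part (hdim : 1 < Module.rank ℝ (Lp ℝ 1 μ))
    (Q : Lp ℝ 1 μ → Lp ℝ 1 μ → Lp ℝ 1 μ) (hQ : IsQSO μ Q) (hmix : NormQuasiMixing μ Q) :
    ∃ ε > (0 : ℝ), ∀ Q' : Lp ℝ 1 μ → Lp ℝ 1 μ → Lp ℝ 1 μ,
      IsQSO μ Q' → du μ Q Q' < ε → NormQuasiMixing μ Q' := by
  haveI hne : Nonempty ↥(Density μ) := density_nonempty hdim
  obtain ⟨N, hN⟩ := (hmix.eventually (gt_mem_nhds (by norm_num : (0:ℝ) < 2⁻¹))).exists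
  refine ⟨2⁻¹ / (2 * 6 ^ N), by positivity, fun Q' hQ' hdu => ?_⟩
  have hd0 : 0 ≤ du μ Q Q' := du_nonneg hQ hQ'
  have hp : (1:ℝ) ≤ 6 ^ N := one_le_pow₀ (by norm_num)
  have hlt : supDiff μ Q' N < 1 := by
    have h1 := supDiff_pert hQ hQ' N
    have h2 : 2 * ((6:ℝ) ^ N - 1) * du μ Q Q' ≤ 2 * 6 ^ N * du μ Q Q' := by nlinarith
    have h3 : 2 * (6:ℝ) ^ N * du μ Q Q' < 2 * 6 ^ N * (2⁻¹ / (2 * 6 ^ N)) := by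
      refine mul_lt_mul_of_pos_left hdu ?_
      positivity
    have h4 : 2 * (6:ℝ) ^ N * (2⁻¹ / (2 * 6 ^ N)) = 2⁻¹ := by
      field_simp
    nlinarith
  exact nqm_of_lt_one hQ' (le_refl (supDiff μ Q' N)) (supDiff_nonneg hQ' N) hlt

end NQM

end

/-- The set `𝔔_nqm` of norm quasi-mixing quadratic stochastic operators is a
dense and open subset of the set `𝔔` of all quadratic stochastic operators for the topology
induced by the metric `d_u` (stated metrically: every QSO can be `d_u`-approximated by norm
quasi-mixing QSOs, and around every norm quasi-mixing QSO there is a `d_u`-ball of QSOs all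
of which are norm quasi-mixing). The setting assumes `dim L¹ > 1`. -/
theorem normQuasiMixing_dense_open {X : Type*} [MeasurableSpace X]
    (μ : Measure X) [SigmaFinite μ]
    (hdim : 1 < Module.rank ℝ (Lp ℝ 1 μ)) :
    (∀ Q : Lp ℝ 1 μ → Lp ℝ 1 μ → Lp ℝ 1 μ, IsQSO μ Q → ∀ ε > (0 : ℝ),
      ∃ Q' : Lp ℝ 1 μ → Lp ℝ 1 μ → Lp ℝ 1 μ,
        IsQSO μ Q' ∧ NormQuasiMixing μ Q' ∧ du μ Q Q' < ε) ∧
    (∀ Q : Lp ℝ 1 μ → Lp ℝ 1 μ → Lp ℝ 1 μ, IsQSO μ Q → NormQuasiMixing μ Q →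
      ∃ ε > (0 : ℝ), ∀ Q' : Lp ℝ 1 μ → Lp ℝ 1 μ → Lp ℝ 1 μ,
        IsQSO μ Q' → du μ Q Q' < ε → NormQuasiMixing μ Q') := by
  constructor
  · intro Q hQ ε hε
    exact NQM.dense_part hdim Q hQ hε
  · intro Q hQ hmix
    exact NQM.open_part hdim Q hQ hmix
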